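/- Taking α = 1 in the parameterized inequality recovers the Zhang et al. relation: for N ≥ 2 Hermitian observables A_i, a density matrix ρ, and x ∈ {0,1}: ∑_{i=1}^N Δ²_ρ(A_i) ≥ (1/(2N−2))·[ (2/(N(N−1)))·(∑_{1≤i<j≤N} Δ_ρ(A_i + (−1)^x A_j))² + ∑_{1≤i<j≤N} Δ²_ρ(A_i + (−1)^{x+1} A_j) ]. -/

import Mathlib

open Finset ComplexOrder

/-- Variance of an observable `M` in the state `ρ`. -/
noncomputable def qvar {d : ℕ} (ρ M : Matrix (Fin d) (Fin d) ℂ) : ℝ :=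
  ((ρ * M ^ 2).trace - (ρ * M).trace ^ 2).re

/-- Standard deviation of an observable `M` in the state `ρ`. -/
noncomputable def qdev {d : ℕ} (ρ M : Matrix (Fin d) (Fin d) ℂ) : ℝ :=
  Real.sqrt (qvar ρ M)

lemma psd_trace_nonneg {d : ℕ} {M : Matrix (Fin d) (Fin d) ℂ} (h : M.PosSemidef) :
    0 ≤ M.trace := by
  rw [Matrix.trace]
  refine Finset.sum_nonneg fun i _ => ?_
  exact h.diag_nonneg

lemma psd_trace_mul_nonneg {d : ℕ} {ρ Q : Matrix (Fin d) (Fin d) ℂ}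
    (hρ : ρ.PosSemidef) (hQ : Q.PosSemidef) : 0 ≤ (ρ * Q).trace := by
  open scoped MatrixOrder Matrix.Norms.L2Operator in
  obtain ⟨B, rfl⟩ := CStarAlgebra.nonneg_iff_eq_star_mul_self.mp hQ.nonneg
  change 0 ≤ (ρ * (B.conjTranspose * B)).trace
  have : (ρ * (B.conjTranspose * B)).trace = (B * ρ * B.conjTranspose).trace := by
    rw [← Matrix.mul_assoc, Matrix.trace_mul_comm, ← Matrix.mul_assoc]
  rw [this]
  exact psd_trace_nonneg (hρ.mul_mul_conjTranspose_same B)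

lemma trace_mul_real {d : ℕ} {ρ M : Matrix (Fin d) (Fin d) ℂ}
    (hρ : ρ.IsHermitian) (hM : M.IsHermitian) :
    (ρ * M).trace = (((ρ * M).trace).re : ℂ) := by
  have : star (ρ * M).trace = (ρ * M).trace := by
    rw [← Matrix.trace_conjTranspose, Matrix.conjTranspose_mul, hρ.eq, hM.eq,
      Matrix.trace_mul_comm]
  exact (Complex.conj_eq_iff_re.mp this).symm

lemma qvar_nonneg {d : ℕ} {ρ M : Matrix (Fin d) (Fin d) ℂ}
    (hρ : ρ.PosSemidef) (hρ1 : ρ.trace = 1) (hM : M.IsHermitian) :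
    0 ≤ qvar ρ M := by
  set t : ℂ := (ρ * M).trace with ht
  set c : ℂ := ((t.re : ℝ) : ℂ) with hc
  have htc : t = c := trace_mul_real hρ.1 hM
  set M' : Matrix (Fin d) (Fin d) ℂ := M - c • 1 with hM'
  have hM'h : M'.IsHermitian := by
    refine hM.sub ?_
    simp [Matrix.IsHermitian, Matrix.conjTranspose_smul, hc]
  have hpsd : (M' ^ 2).PosSemidef := by
    have := Matrix.posSemidef_conjTranspose_mul_self M'
    rwa [hM'h.eq, ← sq] at this
  have key : (ρ * M' ^ 2).trace = (ρ * M ^ 2).trace - t ^ 2 := by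
    have expand : M' ^ 2 = M ^ 2 - (2 * c) • M + (c * c) • 1 := by
      simp only [hM', sq]
      simp only [Matrix.sub_mul, Matrix.mul_sub, Matrix.smul_mul, Matrix.mul_smul,
        Matrix.mul_one, Matrix.one_mul, smul_smul]
      module
    rw [expand]
    simp only [Matrix.mul_add, Matrix.mul_sub, Matrix.mul_smul, Matrix.trace_add,
      Matrix.trace_sub, Matrix.trace_smul, Matrix.mul_one, hρ1, ← ht, htc]
    ring_nf
  have h0 : 0 ≤ (ρ * M' ^ 2).trace := psd_trace_mul_nonneg hρ hpsd
  rw [key] at h0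
  rw [Complex.le_def] at h0
  simpa [qvar, ← ht] using h0.1

lemma qvar_parallelogram {d : ℕ} (ρ : Matrix (Fin d) (Fin d) ℂ)
    (A B : Matrix (Fin d) (Fin d) ℂ) (ε : ℂ) (hε : ε * ε = 1) :
    qvar ρ (A + ε • B) + qvar ρ (A - ε • B) = 2 * qvar ρ A + 2 * qvar ρ B := by
  have key : ((ρ * (A + ε • B) ^ 2).trace - (ρ * (A + ε • B)).trace ^ 2)
      + ((ρ * (A - ε • B) ^ 2).trace - (ρ * (A - ε • B)).trace ^ 2)
      = 2 * ((ρ * A ^ 2).trace - (ρ * A).trace ^ 2)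
      + 2 * ((ρ * B ^ 2).trace - (ρ * B).trace ^ 2) := by
    simp only [sq, Matrix.add_mul, Matrix.mul_add, Matrix.sub_mul, Matrix.mul_sub,
      Matrix.smul_mul, Matrix.mul_smul, Matrix.trace_add, Matrix.trace_sub,
      Matrix.trace_smul, smul_smul, smul_eq_mul]
    have hε2 : ε ^ 2 = 1 := by rw [sq]; exact hε
    ring_nf
    rw [hε2]
    ring
  have := congrArg Complex.re key
  simpa [qvar, Complex.add_re, Complex.sub_re, Complex.mul_re] using this

lemma sum_pairs {N : ℕ} (h : Fin N → Fin N → ℝ) :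
    ∑ i, ∑ j ∈ univ.filter (fun j => i < j), h i j
      = ∑ p ∈ (univ ×ˢ univ).filter (fun p : Fin N × Fin N => p.1 < p.2), h p.1 p.2 := by
  rw [Finset.sum_filter, Finset.sum_product]
  simp [Finset.sum_filter]

lemma gauss_real {N : ℕ} : ∑ i : Fin N, ((i : ℕ) : ℝ) = (N : ℝ) * ((N : ℝ) - 1) / 2 := by
  have h := Finset.sum_range_id_mul_two N
  have h2 : ((∑ i ∈ range N, i : ℕ) : ℝ) * 2 = (N : ℝ) * ((N : ℝ) - 1) := by
    rcases Nat.eq_zero_or_pos N with h0 | h0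
    · subst h0; simp
    · rw [← Nat.cast_ofNat, ← Nat.cast_mul, h, Nat.cast_mul, Nat.cast_pred h0]
  rw [Fin.sum_univ_eq_sum_range (fun i => ((i : ℕ) : ℝ))]
  push_cast at h2 ⊢
  linarith

lemma card_Ioi_real {N : ℕ} (i : Fin N) :
    (((univ.filter (fun j => i < j)).card : ℕ) : ℝ) = (N : ℝ) - 1 - ((i : ℕ) : ℝ) := by
  have : univ.filter (fun j => i < j) = Finset.Ioi i := by
    ext j; simp
  rw [this, Fin.card_Ioi]
  have hi : (i : ℕ) ≤ N - 1 := Nat.le_pred_of_lt i.isLt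
  have hN : 1 ≤ N := Nat.one_le_of_lt i.isLt
  rw [Nat.cast_sub hi, Nat.cast_pred hN]

lemma card_Iio_real {N : ℕ} (j : Fin N) :
    (((univ.filter (fun i : Fin N => i < j)).card : ℕ) : ℝ) = ((j : ℕ) : ℝ) := by
  have : univ.filter (fun i => i < j) = Finset.Iio j := by
    ext i; simp
  rw [this, Fin.card_Iio]

lemma pairs_card_real {N : ℕ} :
    ((((univ ×ˢ univ).filter (fun p : Fin N × Fin N => p.1 < p.2)).card : ℕ) : ℝ)
      = (N : ℝ) * ((N : ℝ) - 1) / 2 := by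
  have : (((univ ×ˢ univ).filter (fun p : Fin N × Fin N => p.1 < p.2)).card : ℝ)
      = ∑ p ∈ (univ ×ˢ univ).filter (fun p : Fin N × Fin N => p.1 < p.2), (1 : ℝ) := by
    simp
  rw [this, ← sum_pairs (fun _ _ => (1:ℝ))]
  have : ∀ i : Fin N, ∑ j ∈ univ.filter (fun j => i < j), (1:ℝ)
      = (N : ℝ) - 1 - ((i : ℕ) : ℝ) := by
    intro i
    rw [Finset.sum_const, nsmul_eq_mul, mul_one, card_Ioi_real]
  rw [Finset.sum_congr rfl (fun i _ => this i), Finset.sum_sub_distrib, gauss_real,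
    Finset.sum_sub_distrib]
  simp [Finset.card_univ, mul_comm]
  ring

lemma countsum {N : ℕ} (v : Fin N → ℝ) :
    ∑ i, ∑ j ∈ univ.filter (fun j => i < j), (v i + v j)
      = ((N : ℝ) - 1) * ∑ i, v i := by
  have h1 : ∑ i, ∑ j ∈ univ.filter (fun j => i < j), v i
      = ∑ i : Fin N, ((N : ℝ) - 1 - ((i : ℕ) : ℝ)) * v i := by
    refine Finset.sum_congr rfl fun i _ => ?_
    rw [Finset.sum_const, nsmul_eq_mul, card_Ioi_real]
  have h2 : ∑ i, ∑ j ∈ univ.filter (fun j => i < j), v j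
      = ∑ i : Fin N, ((i : ℕ) : ℝ) * v i := by
    simp_rw [Finset.sum_filter]
    rw [Finset.sum_comm]
    refine Finset.sum_congr rfl fun j _ => ?_
    rw [← Finset.sum_filter, Finset.sum_const, nsmul_eq_mul, card_Iio_real]
  simp_rw [Finset.sum_add_distrib]
  rw [h1, h2, ← Finset.sum_add_distrib, Finset.mul_sum]
  refine Finset.sum_congr rfl fun i _ => ?_
  ring

theorem zhang_uncertainty {d N : ℕ} (hN : 2 ≤ N) (ρ : Matrix (Fin d) (Fin d) ℂ)
    (hρ : ρ.PosSemidef) (hρ1 : ρ.trace = 1)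
    (A : Fin N → Matrix (Fin d) (Fin d) ℂ) (hA : ∀ i, (A i).IsHermitian)
    (x : ℕ) (hx : x ∈ ({0, 1} : Finset ℕ)) :
    ∑ i, qvar ρ (A i) ≥
      (1 / (2 * (N : ℝ) - 2)) *
        ((2 / ((N : ℝ) * ((N : ℝ) - 1))) *
          (∑ i : Fin N, ∑ j ∈ univ.filter (fun j => i < j),
            qdev ρ (A i + ((-1 : ℂ) ^ x) • A j)) ^ 2 +
         ∑ i : Fin N, ∑ j ∈ univ.filter (fun j => i < j),
            qvar ρ (A i + ((-1 : ℂ) ^ (x + 1)) • A j)) := by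
  simp only [pow_succ, mul_neg_one, neg_smul, ← sub_eq_add_neg]
  set ε : ℂ := (-1 : ℂ) ^ x with hεdef
  have hε : ε * ε = 1 := by
    rw [hεdef, ← pow_add, ← two_mul, pow_mul]
    norm_num
  have hstar : star ε = ε := by
    rw [hεdef]
    simp
  -- Hermitian facts
  have hermS : ∀ j, (ε • A j).IsHermitian := fun j => by
    rw [Matrix.IsHermitian, Matrix.conjTranspose_smul, hstar, (hA j).eq]
  have hermP : ∀ i j : Fin N, (A i + ε • A j).IsHermitian :=
    fun i j => (hA i).add (hermS j)
  have hermM : ∀ i j : Fin N, (A i - ε • A j).IsHermitian :=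
    fun i j => (hA i).sub (hermS j)
  -- nonnegativity
  have hvP : ∀ i j : Fin N, 0 ≤ qvar ρ (A i + ε • A j) :=
    fun i j => qvar_nonneg hρ hρ1 (hermP i j)
  have hvM : ∀ i j : Fin N, 0 ≤ qvar ρ (A i - ε • A j) :=
    fun i j => qvar_nonneg hρ hρ1 (hermM i j)
  set V : ℝ := ∑ i, qvar ρ (A i) with hV
  set Sp : ℝ := ∑ i, ∑ j ∈ univ.filter (fun j => i < j), qvar ρ (A i + ε • A j) with hSp
  set T : ℝ := ∑ i, ∑ j ∈ univ.filter (fun j => i < j), qvar ρ (A i - ε • A j) with hT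
  set S : ℝ := ∑ i, ∑ j ∈ univ.filter (fun j => i < j), qdev ρ (A i + ε • A j) with hS
  have hTnn : 0 ≤ T := by
    rw [hT]
    exact Finset.sum_nonneg fun i _ => Finset.sum_nonneg fun j _ => hvM i j
  have hSpnn : 0 ≤ Sp := by
    rw [hSp]
    exact Finset.sum_nonneg fun i _ => Finset.sum_nonneg fun j _ => hvP i j
  -- parallelogram sum
  have h1 : Sp + T = 2 * (((N : ℝ) - 1) * V) := by
    rw [hSp, hT, ← Finset.sum_add_distrib]
    simp_rw [← Finset.sum_add_distrib]
    have : ∀ i j : Fin N, qvar ρ (A i + ε • A j) + qvar ρ (A i - ε • A j)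
        = 2 * (qvar ρ (A i) + qvar ρ (A j)) := by
      intro i j
      rw [qvar_parallelogram ρ (A i) (A j) ε hε]
      ring
    calc ∑ i, ∑ j ∈ univ.filter (fun j => i < j),
          (qvar ρ (A i + ε • A j) + qvar ρ (A i - ε • A j))
        = ∑ i, ∑ j ∈ univ.filter (fun j => i < j),
          (2 * (qvar ρ (A i) + qvar ρ (A j))) := by
          exact Finset.sum_congr rfl fun i _ => Finset.sum_congr rfl fun j _ => this i j
      _ = 2 * ∑ i, ∑ j ∈ univ.filter (fun j => i < j), (qvar ρ (A i) + qvar ρ (A j)) := by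
          rw [Finset.mul_sum]
          exact Finset.sum_congr rfl fun i _ => (Finset.mul_sum _ _ _).symm
      _ = 2 * (((N : ℝ) - 1) * V) := by rw [countsum (fun i => qvar ρ (A i))]
  -- Cauchy-Schwarz
  have h2 : S ^ 2 ≤ ((N : ℝ) * ((N : ℝ) - 1) / 2) * Sp := by
    rw [hS, sum_pairs (fun i j => qdev ρ (A i + ε • A j))]
    have cs := sq_sum_le_card_mul_sum_sq
      (s := (univ ×ˢ univ).filter (fun p : Fin N × Fin N => p.1 < p.2))
      (f := fun p => qdev ρ (A p.1 + ε • A p.2))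
    have hsq : ∀ p : Fin N × Fin N, qdev ρ (A p.1 + ε • A p.2) ^ 2
        = qvar ρ (A p.1 + ε • A p.2) := fun p => Real.sq_sqrt (hvP p.1 p.2)
    calc (∑ p ∈ (univ ×ˢ univ).filter (fun p : Fin N × Fin N => p.1 < p.2),
            qdev ρ (A p.1 + ε • A p.2)) ^ 2
        ≤ (((univ ×ˢ univ).filter (fun p : Fin N × Fin N => p.1 < p.2)).card : ℝ)
            * ∑ p ∈ (univ ×ˢ univ).filter (fun p : Fin N × Fin N => p.1 < p.2),
              qdev ρ (A p.1 + ε • A p.2) ^ 2 := cs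
      _ = ((N : ℝ) * ((N : ℝ) - 1) / 2) * Sp := by
          rw [pairs_card_real]
          congr 1
          rw [Finset.sum_congr rfl fun p _ => hsq p, ← sum_pairs (fun i j => qvar ρ (A i + ε • A j))]
  -- final arithmetic
  have hNr : (2 : ℝ) ≤ (N : ℝ) := by exact_mod_cast hN
  have hpos : 0 < (N : ℝ) * ((N : ℝ) - 1) := by nlinarith
  have hpos2 : 0 < 2 * (N : ℝ) - 2 := by linarith
  have e1 : (2 / ((N : ℝ) * ((N : ℝ) - 1))) * S ^ 2 ≤ Sp := by
    rw [div_mul_eq_mul_div, div_le_iff₀ hpos]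
    nlinarith [h2]
  calc (1 / (2 * (N : ℝ) - 2)) * ((2 / ((N : ℝ) * ((N : ℝ) - 1))) * S ^ 2 + T)
      ≤ (1 / (2 * (N : ℝ) - 2)) * (Sp + T) := by
        apply mul_le_mul_of_nonneg_left (by linarith) (by positivity)
    _ = V := by
        rw [h1]
        field_simp [show (N:ℝ) - 1 ≠ 0 by linarith]
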